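/- Let m ∈ ℕ (m ≥ 1). Then ∫_{−∞}^{∞} Φ(x) dx = 1; that is, Φ is a probability density function on ℝ. -/

import Mathlib

open scoped BigOperators
open Real Filter

/-- The algebraic sigmoid function `φ(x) = x / (1 + x^(2m))^(1/(2m))`. -/
noncomputable def phi (m : ℕ) (x : ℝ) : ℝ :=
  x / (1 + x ^ (2 * m)) ^ ((1 : ℝ) / (2 * m))

/-- The activation function `Φ(x) = (φ(x+1) - φ(x-1))/4`. -/
noncomputable def Phi (m : ℕ) (x : ℝ) : ℝ :=
  (phi m (x + 1) - phi m (x - 1)) / 4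

open MeasureTheory Set
open scoped Topology

section Aux
variable (m : ℕ)
variable (hm : 1 ≤ m)
include hm

omit hm in
lemma base_pos (x : ℝ) : 0 < 1 + x ^ (2 * m) := by
  have : 0 ≤ x ^ (2 * m) := by rw [pow_mul]; positivity
  linarith

lemma h2m : (2 * (m : ℝ)) ≠ 0 := by
  have : (1:ℝ) ≤ m := by exact_mod_cast hm
  positivity

lemma rpow_inv (A : ℝ) (hA : 0 ≤ A) :
    (A ^ ((1 : ℝ) / (2 * m))) ^ (2 * m) = A := by
  rw [← Real.rpow_natCast (A ^ ((1:ℝ)/(2*m))) (2 * m), ← Real.rpow_mul hA]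
  push_cast
  rw [one_div, inv_mul_cancel₀ (h2m m hm), Real.rpow_one]

lemma pow_rpow_inv (x : ℝ) (hx : 0 ≤ x) :
    ((x ^ (2 * m) : ℝ)) ^ ((1 : ℝ) / (2 * m)) = x := by
  rw [← Real.rpow_natCast x (2 * m), ← Real.rpow_mul hx]
  push_cast
  rw [mul_one_div, div_self (h2m m hm), Real.rpow_one]

omit hm in
lemma denom_pos (x : ℝ) : 0 < (1 + x ^ (2 * m)) ^ ((1 : ℝ) / (2 * m)) :=
  Real.rpow_pos_of_pos (base_pos m x) _

omit hm in
lemma phi_odd (x : ℝ) : phi m (-x) = - phi m x := by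
  unfold phi
  rw [Even.neg_pow ⟨m, two_mul m⟩, neg_div]

lemma phi_mono_aux {a b : ℝ} (ha : 0 ≤ a) (hab : a ≤ b) : phi m a ≤ phi m b := by
  have hb : 0 ≤ b := ha.trans hab
  unfold phi
  rw [div_le_div_iff₀ (denom_pos m a) (denom_pos m b)]
  have hk : 2 * m ≠ 0 := by omega
  rw [← pow_le_pow_iff_left₀ (by positivity) (by positivity) hk, mul_pow, mul_pow,
    rpow_inv m hm (1 + b ^ (2*m)) (base_pos m b).le, rpow_inv m hm (1 + a ^ (2*m)) (base_pos m a).le]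
  nlinarith [pow_le_pow_left₀ ha hab (2 * m), pow_nonneg ha (2*m), pow_nonneg hb (2*m)]

lemma phi_mono : Monotone (phi m) := by
  intro a b hab
  rcases le_total 0 a with ha | ha
  · exact phi_mono_aux m hm ha hab
  · rcases le_total b 0 with hb | hb
    · have := phi_mono_aux m hm (by linarith : (0:ℝ) ≤ -b) (by linarith : -b ≤ -a)
      rw [phi_odd, phi_odd] at this
      linarith
    · have h1 : phi m a ≤ 0 := div_nonpos_iff.2 (Or.inr ⟨ha, (denom_pos m a).le⟩)
      have h2 : 0 ≤ phi m b := div_nonneg hb (denom_pos m b).le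
      linarith

lemma phi_le_one (x : ℝ) : phi m x ≤ 1 := by
  rcases le_total x 0 with hx | hx
  · have : phi m x ≤ 0 := div_nonpos_iff.2 (Or.inr ⟨hx, (denom_pos m x).le⟩)
    linarith
  · unfold phi
    rw [div_le_one (denom_pos m x)]
    calc x = (x ^ (2*m)) ^ ((1:ℝ)/(2*m)) := (pow_rpow_inv m hm x hx).symm
      _ ≤ (1 + x ^ (2*m)) ^ ((1:ℝ)/(2*m)) := by
          apply Real.rpow_le_rpow (by positivity) (by linarith) (by positivity)

lemma neg_one_le_phi (x : ℝ) : -1 ≤ phi m x := by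
  have := phi_le_one m hm (-x)
  rw [phi_odd] at this
  linarith

omit hm in
lemma phi_cont : Continuous (phi m) := by
  apply Continuous.div continuous_id
  · exact (continuous_const.add (continuous_pow _)).rpow_const
      (fun x => Or.inl (base_pos m x).ne')
  · exact fun x => (denom_pos m x).ne'

lemma phi_tendsto_atTop : Tendsto (phi m) atTop (𝓝 1) := by
  have hk : 2 * m ≠ 0 := by omega
  have h1 : Tendsto (fun x : ℝ => 1 + x ^ (2*m)) atTop atTop :=
    tendsto_atTop_add_const_left _ 1 (tendsto_pow_atTop hk)
  have h2 : Tendsto (fun x : ℝ => 1 - 1/(1 + x ^ (2*m))) atTop (𝓝 1) := by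
    have := h1.inv_tendsto_atTop
    have h3 : Tendsto (fun x : ℝ => 1 - (1 + x ^ (2*m))⁻¹) atTop (𝓝 (1 - 0)) :=
      tendsto_const_nhds.sub this
    simpa [one_div] using h3
  have h4 : Tendsto (fun x : ℝ => (1 - 1/(1 + x ^ (2*m))) ^ ((1:ℝ)/(2*m))) atTop (𝓝 1) := by
    have := h2.rpow_const (p := (1:ℝ)/(2*m)) (Or.inr (by positivity))
    simpa using this
  apply h4.congr'
  filter_upwards [eventually_ge_atTop (0:ℝ)] with x hx
  have hb := base_pos m x
  have : 1 - 1/(1 + x ^ (2*m)) = x ^ (2*m) / (1 + x ^ (2*m)) := by field_simp; ring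
  rw [this, Real.div_rpow (by positivity) hb.le, pow_rpow_inv m hm x hx]
  rfl

lemma phi_tendsto_atBot : Tendsto (phi m) atBot (𝓝 (-1)) := by
  have := ((phi_tendsto_atTop m hm).comp tendsto_neg_atBot_atTop).neg
  simp only [Function.comp_def] at this
  apply this.congr
  intro x
  rw [← phi_odd, neg_neg]

end Aux

theorem Phi_integral_eq_one (m : ℕ) (hm : 1 ≤ m) :
    ∫ x : ℝ, Phi m x = 1 := by
  set G : ℝ → ℝ := fun x => ∫ t in (0:ℝ)..x, phi m t with hGdef
  have hint : ∀ a b : ℝ, IntervalIntegrable (phi m) volume a b :=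
    fun a b => (phi_cont m).intervalIntegrable a b
  have hG : ∀ x : ℝ, HasDerivAt G (phi m x) x := by
    intro x
    exact intervalIntegral.integral_hasDerivAt_right (hint 0 x)
      ((phi_cont m).stronglyMeasurableAtFilter _ _)
      (phi_cont m).continuousAt
  set F : ℝ → ℝ := fun x => (G (x+1) - G (x-1)) / 4 with hFdef
  have hF : ∀ x : ℝ, HasDerivAt F (Phi m x) x := by
    intro x
    have h1 : HasDerivAt (fun y : ℝ => G (y+1)) (phi m (x+1)) x := by
      have := (hG (x+1)).comp x ((hasDerivAt_id x).add_const 1)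
      simpa [Function.comp_def] using this
    have h2 : HasDerivAt (fun y : ℝ => G (y-1)) (phi m (x-1)) x := by
      have := (hG (x-1)).comp x ((hasDerivAt_id x).sub_const 1)
      simpa [Function.comp_def] using this
    have := (h1.sub h2).div_const 4
    simpa [Phi] using this
  have F_eq : ∀ x : ℝ, F x = (∫ t in (x-1)..(x+1), phi m t) / 4 := by
    intro x
    have : G (x+1) - G (x-1) = ∫ t in (x-1)..(x+1), phi m t :=
      intervalIntegral.integral_interval_sub_left (hint 0 (x+1)) (hint 0 (x-1))
    simp only [hFdef, this]
  have hle : ∀ x : ℝ, x - 1 ≤ x + 1 := fun x => by linarith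
  have up : ∀ x : ℝ, F x ≤ 1/2 := by
    intro x
    rw [F_eq]
    have h := intervalIntegral.integral_mono_on (hle x) (hint _ _)
      (intervalIntegrable_const (c := (1:ℝ))) (fun t _ => phi_le_one m hm t)
    rw [intervalIntegral.integral_const] at h
    simp only [smul_eq_mul] at h
    have : (x + 1 - (x - 1)) * 1 = 2 := by ring
    rw [this] at h
    linarith
  have low : ∀ x : ℝ, phi m (x-1) / 2 ≤ F x := by
    intro x
    rw [F_eq]
    have h := intervalIntegral.integral_mono_on (hle x)
      (intervalIntegrable_const (c := phi m (x-1))) (hint _ _)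
      (fun t ht => phi_mono m hm ht.1)
    rw [intervalIntegral.integral_const] at h
    simp only [smul_eq_mul] at h
    have : (x + 1 - (x - 1)) * phi m (x-1) = 2 * phi m (x-1) := by ring
    rw [this] at h
    linarith
  have lowb : ∀ x : ℝ, (-1:ℝ)/2 ≤ F x := by
    intro x
    rw [F_eq]
    have h := intervalIntegral.integral_mono_on (hle x)
      (intervalIntegrable_const (c := (-1:ℝ))) (hint _ _)
      (fun t _ => neg_one_le_phi m hm t)
    rw [intervalIntegral.integral_const] at h
    simp only [smul_eq_mul] at h
    have : (x + 1 - (x - 1)) * (-1) = -2 := by ring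
    rw [this] at h
    linarith
  have upb : ∀ x : ℝ, F x ≤ phi m (x+1) / 2 := by
    intro x
    rw [F_eq]
    have h := intervalIntegral.integral_mono_on (hle x) (hint _ _)
      (intervalIntegrable_const (c := phi m (x+1)))
      (fun t ht => phi_mono m hm ht.2)
    rw [intervalIntegral.integral_const] at h
    simp only [smul_eq_mul] at h
    have : (x + 1 - (x - 1)) * phi m (x+1) = 2 * phi m (x+1) := by ring
    rw [this] at h
    linarith
  have htop : Tendsto F atTop (𝓝 (1/2)) := by
    have hl : Tendsto (fun x : ℝ => phi m (x-1) / 2) atTop (𝓝 (1/2)) := by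
      have h1 : Tendsto (fun x : ℝ => x - 1) atTop atTop :=
        tendsto_atTop_add_const_right atTop (-1) tendsto_id
      have := ((phi_tendsto_atTop m hm).comp h1).div_const 2
      apply this.congr
      intro x
      simp [Function.comp, sub_eq_add_neg]
    exact tendsto_of_tendsto_of_tendsto_of_le_of_le hl tendsto_const_nhds low up
  have hbot : Tendsto F atBot (𝓝 (-1/2)) := by
    have hu : Tendsto (fun x : ℝ => phi m (x+1) / 2) atBot (𝓝 (-1/2)) := by
      have h1 : Tendsto (fun x : ℝ => x + 1) atBot atBot :=
        tendsto_atBot_add_const_right atBot 1 tendsto_id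
      have := ((phi_tendsto_atBot m hm).comp h1).div_const 2
      simpa using this
    exact tendsto_of_tendsto_of_tendsto_of_le_of_le tendsto_const_nhds hu lowb upb
  have Phi_nonneg : ∀ x : ℝ, 0 ≤ Phi m x := by
    intro x
    have := phi_mono m hm (hle x)
    unfold Phi
    linarith
  have hIoi : IntegrableOn (Phi m) (Ioi 0) := by
    exact integrableOn_Ioi_deriv_of_nonneg' (fun x _ => hF x) (fun x _ => Phi_nonneg x) htop
  have Phi_even : ∀ x : ℝ, Phi m (-x) = Phi m x := by
    intro x
    unfold Phi
    rw [show -x + 1 = -(x - 1) by ring, show -x - 1 = -(x + 1) by ring,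
      phi_odd, phi_odd]
    ring
  have hIic : IntegrableOn (Phi m) (Iic 0) := by
    rw [← Measure.map_neg_eq_self (volume : Measure ℝ)]
    have A : MeasurableEmbedding fun x : ℝ => -x :=
      (Homeomorph.neg ℝ).measurableEmbedding
    rw [A.integrableOn_map_iff]
    have : (Phi m ∘ fun x : ℝ => -x) = Phi m := funext fun x => Phi_even x
    rw [this, neg_preimage, neg_Iic, neg_zero]
    exact (integrableOn_Ici_iff_integrableOn_Ioi).mpr hIoi
  have hInt : Integrable (Phi m) := by
    rw [← integrableOn_univ, ← Set.Iic_union_Ioi (a := (0:ℝ))]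
    exact hIic.union hIoi
  have := MeasureTheory.integral_of_hasDerivAt_of_tendsto hF hInt hbot htop
  rw [this]
  norm_num
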